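/- Let x : ℝ → ℝⁿ and θ : ℝ → ℝ^d be continuously differentiable, let f : ℝⁿ × ℝ^d → ℝⁿ be continuously differentiable, and suppose x'(t) = f(x(t), θ(t)) for all t ≥ t₀. Let h : ℝⁿ → ℝ be twice continuously differentiable, let α₁ be a continuously differentiable extended class K function, and let α₂ be an extended class K function. Define ψ₁(t) = Dh(x(t))[f(x(t), θ(t))] + α₁(h(x(t))), where Dh denotes the derivative of h. If h(x(t₀)) ≥ 0, ψ₁(t₀) ≥ 0, and ψ₁'(t) + α₂(ψ₁(t)) ≥ 0 for all t ≥ t₀, then h(x(t)) ≥ 0 for all t ≥ t₀. -/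

import Mathlib

/-- Key comparison lemma: if a function continuous on `[t₀, ∞)` has strictly positive
derivative at every point `t > t₀` where it is negative, and starts nonnegative, then it
stays nonnegative. -/
lemma nonneg_invariant_of_deriv_pos_on_neg (t₀ : ℝ) (g : ℝ → ℝ)
    (hg : ContinuousOn g (Set.Ici t₀))
    (hpos : ∀ t, t₀ < t → g t < 0 → 0 < deriv g t)
    (h0 : 0 ≤ g t₀) : ∀ t, t₀ ≤ t → 0 ≤ g t := by
  intro t ht
  by_contra hneg
  push_neg at hneg
  have ht0t : t₀ < t := by
    rcases lt_or_eq_of_le ht with h' | h'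
    · exact h'
    · exact absurd h0 (by rw [h']; linarith)
  set S : Set ℝ := {s | s ∈ Set.Icc t₀ t ∧ 0 ≤ g s} with hS
  have hgIcc : ContinuousOn g (Set.Icc t₀ t) :=
    hg.mono (fun s hs => hs.1)
  have hScl : IsClosed S := by
    have : S = Set.Icc t₀ t ∩ (Set.Icc t₀ t ∩ g ⁻¹' Set.Ici 0) := by
      ext s; constructor
      · rintro ⟨hs1, hs2⟩; exact ⟨hs1, hs1, hs2⟩
      · rintro ⟨hs1, _, hs2⟩; exact ⟨hs1, hs2⟩
    rw [this]
    exact isClosed_Icc.inter (hgIcc.preimage_isClosed_of_isClosed isClosed_Icc isClosed_Ici)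
  have hSne : S.Nonempty := ⟨t₀, ⟨le_refl _, le_of_lt ht0t⟩, h0⟩
  have hSbdd : BddAbove S := ⟨t, fun s hs => hs.1.2⟩
  set τ := sSup S with hτ
  have hScomp : IsCompact S := isCompact_Icc.of_isClosed_subset hScl (fun s hs => hs.1)
  have hτS : τ ∈ S := hScomp.sSup_mem hSne
  have hτ1 : t₀ ≤ τ := hτS.1.1
  have hτ2 : τ ≤ t := hτS.1.2
  have hgτ : 0 ≤ g τ := hτS.2
  have hτt : τ < t := by
    rcases lt_or_eq_of_le hτ2 with h' | h'
    · exact h'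
    · exact absurd hgτ (by rw [h']; linarith)
  -- g is strictly monotone on [τ, t]
  have hmono : StrictMonoOn g (Set.Icc τ t) := by
    apply strictMonoOn_of_deriv_pos (convex_Icc τ t)
    · exact hgIcc.mono (fun s hs => ⟨le_trans hτ1 hs.1, hs.2⟩)
    · intro s hs
      rw [interior_Icc] at hs
      have hst0 : t₀ < s := lt_of_le_of_lt hτ1 hs.1
      have hgs : g s < 0 := by
        by_contra hc
        push_neg at hc
        have : s ∈ S := ⟨⟨le_of_lt hst0, le_of_lt hs.2⟩, hc⟩
        exact absurd (le_csSup hSbdd this) (not_le.mpr hs.1)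
      exact hpos s hst0 hgs
  have := hmono (Set.left_mem_Icc.mpr (le_of_lt hτt)) (Set.right_mem_Icc.mpr (le_of_lt hτt)) hτt
  linarith

/-- Invariance propagation to nonlinear layers (Theorem 3): along a trajectory of
`ẋ = f(x, θ)` with time-varying parameters `θ`, with first-order barrier
`ψ₁(t) = Dh(x t)[f(x t, θ t)] + α₁(h (x t))`, if `h(x t₀) ≥ 0`, `ψ₁ t₀ ≥ 0`, and
`ψ₁' t + α₂(ψ₁ t) ≥ 0` for all `t ≥ t₀`, then `h(x t) ≥ 0` for all `t ≥ t₀`. -/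
theorem invariance_propagation_nonlinear_layer
    (n d : ℕ) (t₀ : ℝ)
    (x : ℝ → Fin n → ℝ) (hx : ContDiff ℝ 1 x)
    (θ : ℝ → Fin d → ℝ) (hθ : ContDiff ℝ 1 θ)
    (f : (Fin n → ℝ) × (Fin d → ℝ) → Fin n → ℝ) (hf : ContDiff ℝ 1 f)
    (hode : ∀ t, t₀ ≤ t → HasDerivAt x (f (x t, θ t)) t)
    (h : (Fin n → ℝ) → ℝ) (hh : ContDiff ℝ 2 h)
    (α₁ : ℝ → ℝ) (hα₁_smooth : ContDiff ℝ 1 α₁) (hα₁_lip : LocallyLipschitz α₁)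
    (hα₁_mono : StrictMono α₁) (hα₁0 : α₁ 0 = 0)
    (α₂ : ℝ → ℝ) (hα₂_lip : LocallyLipschitz α₂) (hα₂_mono : StrictMono α₂)
    (hα₂0 : α₂ 0 = 0)
    (ψ₁ : ℝ → ℝ)
    (hψ₁ : ∀ t, ψ₁ t = fderiv ℝ h (x t) (f (x t, θ t)) + α₁ (h (x t)))
    (h0 : 0 ≤ h (x t₀)) (hψ₁0 : 0 ≤ ψ₁ t₀)
    (hineq : ∀ t, t₀ ≤ t → 0 ≤ deriv ψ₁ t + α₂ (ψ₁ t)) :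
    ∀ t, t₀ ≤ t → 0 ≤ h (x t) := by
  -- Step 1: ψ₁ ≥ 0 on [t₀, ∞).
  have hψcont : Continuous ψ₁ := by
    have h1 : Continuous fun t => (fderiv ℝ h (x t)) (f (x t, θ t)) := by
      apply Continuous.clm_apply
      · exact (hh.continuous_fderiv two_ne_zero).comp hx.continuous
      · exact hf.continuous.comp (hx.continuous.prodMk hθ.continuous)
    have h2 : Continuous fun t => α₁ (h (x t)) :=
      hα₁_smooth.continuous.comp (hh.continuous.comp hx.continuous)
    have : Continuous fun t => (fderiv ℝ h (x t)) (f (x t, θ t)) + α₁ (h (x t)) := h1.add h2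
    exact this.congr (fun t => (hψ₁ t).symm)
  have hψnn : ∀ t, t₀ ≤ t → 0 ≤ ψ₁ t := by
    apply nonneg_invariant_of_deriv_pos_on_neg t₀ ψ₁ hψcont.continuousOn
    · intro t ht hψt
      have h1 := hineq t (le_of_lt ht)
      have h2 : α₂ (ψ₁ t) < 0 := by
        have := hα₂_mono hψt
        rwa [hα₂0] at this
      linarith
    · exact hψ₁0
  -- Step 2: h ∘ x ≥ 0 on [t₀, ∞).
  have hderiv : ∀ t, t₀ ≤ t →
      HasDerivAt (fun s => h (x s)) ((fderiv ℝ h (x t)) (f (x t, θ t))) t := by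
    intro t ht
    exact ((hh.differentiable two_ne_zero).differentiableAt.hasFDerivAt).comp_hasDerivAt t
      (hode t ht)
  have hcont : Continuous fun s => h (x s) := hh.continuous.comp hx.continuous
  apply nonneg_invariant_of_deriv_pos_on_neg t₀ (fun s => h (x s)) hcont.continuousOn
  · intro t ht hgt
    have hd := (hderiv t (le_of_lt ht)).deriv
    rw [hd]
    have h2 : α₁ (h (x t)) < 0 := by
      have := hα₁_mono hgt
      rwa [hα₁0] at this
    have h3 : ψ₁ t = (fderiv ℝ h (x t)) (f (x t, θ t)) + α₁ (h (x t)) := hψ₁ t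
    have h4 := hψnn t (le_of_lt ht)
    linarith
  · exact h0
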